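/- Let J be a strongly stable ideal in S and I an ideal in the J-marked family Mf(J), i.e., N(J) is a K-basis of S/I. Then x_0 is a non-zero divisor on S/I^sat, the satiety of I is at most the satiety of J, and if J is saturated then I is saturated. Consequently (I : x_0^∞) = I^sat. -/

import Mathlib

open MvPolynomial

namespace Paper

/-- Monomials (exponent vectors) in `N` variables. -/
abbrev Mon (N : ℕ) := Fin N →₀ ℕ

variable {N : ℕ}

/-- Total degree of a monomial. -/
def mdeg (u : Mon N) : ℕ := u.sum fun _ e => e

/-- `BorelStep a b` : `b` is obtained from `a` by one increasing elementary move,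
i.e. `x^a · x_j = x^b · x_i` with `i < j`. -/
def BorelStep (a b : Mon N) : Prop :=
  ∃ i j : Fin N, i < j ∧ a + Finsupp.single j 1 = b + Finsupp.single i 1

/-- `BorelLt a b` : `a <_B b`, i.e. `b` is obtained from `a` by a nonempty
sequence of increasing elementary moves. -/
def BorelLt (a b : Mon N) : Prop := Relation.TransGen BorelStep a b

/-- A (combinatorially encoded) monomial ideal: a set of monomials closed
under multiplication by monomials. -/
def MonIdeal (J : Set (Mon N)) : Prop := ∀ u ∈ J, ∀ d : Mon N, u + d ∈ J

/-- A strongly stable monomial ideal. -/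
def StronglyStable (J : Set (Mon N)) : Prop :=
  MonIdeal J ∧ ∀ b ∈ J, ∀ a, BorelLt b a → a ∈ J

/-- The minimal monomial basis `B_J` of a monomial ideal. -/
def MinBasis (J : Set (Mon N)) : Set (Mon N) :=
  {u | u ∈ J ∧ ∀ v ∈ J, v ≤ u → v = u}

/-- `min(x^a) ≥ max(x^h)`. -/
def StarCond (a h : Mon N) : Prop :=
  ∀ i j : Fin N, a i ≠ 0 → h j ≠ 0 → j ≤ i


variable (K : Type) [Field K]

/-- The monomial `x^u` as a polynomial. -/
noncomputable def mono {N : ℕ} (u : Mon N) : MvPolynomial (Fin N) K :=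
  MvPolynomial.monomial u (1 : K)

/-- The (actual) monomial ideal of `S` spanned by a set of monomials. -/
noncomputable def idealOf {N : ℕ} (J : Set (Mon N)) : Ideal (MvPolynomial (Fin N) K) :=
  Ideal.span (mono K '' J)

/-- The irrelevant maximal ideal `(x_0, …, x_n)`. -/
noncomputable def irrel (N : ℕ) : Ideal (MvPolynomial (Fin N) K) :=
  Ideal.span (Set.range MvPolynomial.X)

/-- The saturation `I^sat = ⋃_j (I : (x_0,…,x_n)^j)`. -/
noncomputable def satIdeal {N : ℕ} (I : Ideal (MvPolynomial (Fin N) K)) :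
    Ideal (MvPolynomial (Fin N) K) :=
  ⨆ k : ℕ, Submodule.colon I ((irrel K N ^ k : Ideal (MvPolynomial (Fin N) K)) : Set (MvPolynomial (Fin N) K))

/-- The satiety of a homogeneous ideal: the smallest `m` such that
`I_t = (I^sat)_t` for all `t ≥ m`. -/
noncomputable def satiety {N : ℕ} (I : Ideal (MvPolynomial (Fin N) K)) : ℕ :=
  sInf {m | ∀ t, m ≤ t → ∀ p : MvPolynomial (Fin N) K,
    p.IsHomogeneous t → (p ∈ I ↔ p ∈ satIdeal K I)}

/-- The saturation of a combinatorial monomial ideal. -/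
def msat {N : ℕ} (J : Set (Mon N)) : Set (Mon N) :=
  {u | ∃ k : ℕ, ∀ d : Mon N, mdeg d = k → u + d ∈ J}

/-- The satiety of a combinatorial monomial ideal. -/
noncomputable def msatiety {N : ℕ} (J : Set (Mon N)) : ℕ :=
  sInf {m | ∀ u : Mon N, m ≤ mdeg u → (u ∈ J ↔ u ∈ msat J)}

/-- `I ∈ Mf(J)`: `I` is homogeneous and the monomials outside `J` form a
`K`-vector-space basis of `S/I`. -/
def MemMf {N : ℕ} (J : Set (Mon N)) (I : Ideal (MvPolynomial (Fin N) K)) : Prop :=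
  (∀ p ∈ I, ∀ d : ℕ, MvPolynomial.homogeneousComponent d p ∈ I) ∧
  LinearIndependent K
    (fun u : {u : Mon N // u ∉ J} => Ideal.Quotient.mk I (mono K u.1)) ∧
  ⊤ ≤ Submodule.span K
    (Set.range fun u : {u : Mon N // u ∉ J} => Ideal.Quotient.mk I (mono K u.1))

/-! ### Auxiliary lemmas -/

section AuxCombinatorial

variable {N : ℕ}

lemma mdeg_degree (u : Mon N) : mdeg u = u.degree := rfl

lemma mdeg_add (u v : Mon N) : mdeg (u + v) = mdeg u + mdeg v := by
  simp [mdeg, Finsupp.sum_add_index]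

lemma mdeg_single (i : Fin N) (k : ℕ) : mdeg (Finsupp.single i k) = k := by
  simp [mdeg, Finsupp.sum_single_index]

lemma mdeg_zero : mdeg (0 : Mon N) = 0 := by simp [mdeg]

lemma mdeg_eq_zero_iff (u : Mon N) : mdeg u = 0 ↔ u = 0 := by
  rw [mdeg_degree]; exact Finsupp.degree_eq_zero_iff u

lemma aux_add_sub {u v : Mon N} (h : u ≤ v) : u + (v - u) = v := by
  ext i; simp [Finsupp.le_def.mp h i]

lemma mdeg_le {u v : Mon N} (h : u ≤ v) : mdeg u ≤ mdeg v := by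
  rw [← aux_add_sub h, mdeg_add]; omega

lemma mdeg_lt {u v : Mon N} (h : u < v) : mdeg u < mdeg v := by
  have hv : u + (v - u) = v := aux_add_sub h.le
  have h0 : v - u ≠ 0 := by
    intro h0; rw [h0, add_zero] at hv; exact absurd hv h.ne
  have h1 : mdeg (v - u) ≠ 0 := fun hc => h0 ((mdeg_eq_zero_iff _).mp hc)
  rw [← hv, mdeg_add]; omega

lemma aux_le_mdeg_eq {u v : Mon N} (h : u ≤ v) (hd : mdeg u = mdeg v) : u = v := by
  rcases lt_or_eq_of_le h with hlt | he
  · exact absurd hd (by have := mdeg_lt hlt; omega)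
  · exact he

lemma aux_split {d : Mon N} {k : ℕ} (h : k ≤ mdeg d) :
    ∃ d1 : Mon N, d1 ≤ d ∧ mdeg d1 = k := by
  induction k with
  | zero => exact ⟨0, zero_le, by simp [mdeg]⟩
  | succ k ih =>
    obtain ⟨d1, hle, hdeg⟩ := ih (by omega)
    have hne : d1 ≠ d := fun he => by rw [he] at hdeg; omega
    have hex : ∃ i, d1 i < d i := by
      by_contra hc
      push_neg at hc
      exact hne (le_antisymm hle (Finsupp.le_def.mpr hc))
    obtain ⟨i, hi⟩ := hex
    refine ⟨d1 + Finsupp.single i 1, ?_, by rw [mdeg_add, hdeg, mdeg_single]⟩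
    intro j
    rcases eq_or_ne j i with rfl | hne'
    · simpa [Finsupp.single_apply] using hi
    · simpa [Finsupp.single_apply, hne'.symm] using Finsupp.le_def.mp hle j

lemma aux_minimal (A : Set (Mon N)) :
    ∀ u ∈ A, ∃ v ∈ A, v ≤ u ∧ ∀ w ∈ A, w ≤ v → w = v := by
  have wf : WellFounded ((· < ·) : Mon N → Mon N → Prop) :=
    Subrelation.wf (fun {a b} h => mdeg_lt h) (InvImage.wf mdeg Nat.lt_wfRel.wf)
  intro u hu
  induction u using wf.induction with
  | _ u ih =>
    by_cases hmin : ∀ w ∈ A, w ≤ u → w = u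
    · exact ⟨u, hu, le_rfl, hmin⟩
    · push_neg at hmin
      obtain ⟨w, hw, hwle, hwne⟩ := hmin
      obtain ⟨v, hv, hvle, hvmin⟩ := ih w (lt_of_le_of_ne hwle hwne) hw
      exact ⟨v, hv, hvle.trans hwle, hvmin⟩

lemma aux_antichain_finite (A : Set (Mon N))
    (h : ∀ u ∈ A, ∀ v ∈ A, u ≤ v → u = v) : A.Finite := by
  by_contra hinf
  have hA : A.IsPWO := Set.isPWO_of_wellQuasiOrderedLE A
  set f := Set.Infinite.natEmbedding A hinf with hf
  obtain ⟨a, b, hab, hle⟩ := hA.exists_lt (f := fun k => (f k : Mon N)) (fun k => (f k).2)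
  have := h _ (f a).2 _ (f b).2 hle
  have : a = b := by
    have := f.injective (Subtype.ext this)
    exact this
  omega

lemma msat_superset {J : Set (Mon N)} : J ⊆ msat J := by
  intro u hu
  refine ⟨0, fun d hd => ?_⟩
  have : d = 0 := (mdeg_eq_zero_iff d).mp hd
  simpa [this] using hu

lemma aux_D {J : Set (Mon N)} (hJ : MonIdeal J) :
    ∃ m : ℕ, ∀ u : Mon N, m ≤ mdeg u → (u ∈ J ↔ u ∈ msat J) := by
  classical
  set A := msat J with hA
  set Mn : Set (Mon N) := {v | v ∈ A ∧ ∀ w ∈ A, w ≤ v → w = v} with hMn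
  have hfin : Mn.Finite :=
    aux_antichain_finite Mn (fun u hu v hv hle => hv.2 u hu.1 hle)
  set kf : Mon N → ℕ := fun v => if h : v ∈ A then h.choose else 0 with hkf
  have hkf' : ∀ v, v ∈ A → ∀ d : Mon N, mdeg d = kf v → v + d ∈ J := by
    intro v hv d hd
    rw [hkf] at hd
    simp only [dif_pos hv] at hd
    exact hv.choose_spec d hd
  refine ⟨hfin.toFinset.sup (fun v => mdeg v + kf v), fun u hu => ?_⟩
  constructor
  · exact fun h => msat_superset h
  · intro huA
    obtain ⟨v, hvA, hvle, hvmin⟩ := aux_minimal A u huA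
    have hvMn : v ∈ Mn := ⟨hvA, hvmin⟩
    have hsup : mdeg v + kf v ≤ mdeg u :=
      le_trans (Finset.le_sup (f := fun v => mdeg v + kf v) (hfin.mem_toFinset.mpr hvMn)) hu
    have hdecomp : v + (u - v) = u := aux_add_sub hvle
    have hdeg : kf v ≤ mdeg (u - v) := by
      have := mdeg_add v (u - v)
      rw [hdecomp] at this
      omega
    obtain ⟨d1, hd1le, hd1deg⟩ := aux_split hdeg
    have h1 : v + d1 ∈ J := hkf' v hvA d1 hd1deg
    have h2 : (v + d1) + ((u - v) - d1) ∈ J := hJ _ h1 _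
    have h3 : (v + d1) + ((u - v) - d1) = u := by
      rw [add_assoc, aux_add_sub hd1le, hdecomp]
    rwa [h3] at h2

lemma aux_single_of_mdeg_one {d : Mon N} (h : mdeg d = 1) :
    ∃ i : Fin N, d = Finsupp.single i 1 := by
  have h0 : d ≠ 0 := fun hc => by simp [hc, mdeg_zero] at h
  obtain ⟨i, hi⟩ : ∃ i, d i ≠ 0 := by
    by_contra hc
    push_neg at hc
    exact h0 (Finsupp.ext fun i => hc i)
  have hle : Finsupp.single i 1 ≤ d := by
    intro j
    rcases eq_or_ne j i with rfl | hne
    · simpa [Finsupp.single_apply] using Nat.one_le_iff_ne_zero.mpr hi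
    · simp [Finsupp.single_apply, hne.symm]
  exact ⟨i, (aux_le_mdeg_eq hle (by rw [mdeg_single, h])).symm⟩

end AuxCombinatorial

section AuxStable

variable {n : ℕ}

/-- Key combinatorial consequence of strong stability: if `x_0 · x^u ∈ J`
then `u ∈ msat J`. -/
lemma aux_mem_msat_of_x0 {J : Set (Mon (n + 1))} (hss : StronglyStable J)
    {u : Mon (n + 1)} (hu : u + Finsupp.single 0 1 ∈ J) : u ∈ msat J := by
  refine ⟨1, fun d hd => ?_⟩
  obtain ⟨i, rfl⟩ := aux_single_of_mdeg_one hd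
  rcases eq_or_ne i 0 with rfl | hne
  · exact hu
  · have hpos : (0 : Fin (n + 1)) < i := Fin.pos_of_ne_zero hne
    have hstep : BorelStep (u + Finsupp.single 0 1) (u + Finsupp.single i 1) :=
      ⟨0, i, hpos, by rw [add_assoc, add_assoc, add_comm (Finsupp.single 0 1)]⟩
    exact hss.2 _ hu _ (Relation.TransGen.single hstep)

lemma aux_HJ {J : Set (Mon (n + 1))} (hss : StronglyStable J) {m : ℕ}
    (hstab : ∀ u : Mon (n + 1), m ≤ mdeg u → u ∈ msat J → u ∈ J) :
    ∀ u : Mon (n + 1), m ≤ mdeg u → u + Finsupp.single 0 1 ∈ J → u ∈ J :=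
  fun u hm hu => hstab u hm (aux_mem_msat_of_x0 hss hu)

end AuxStable

section AuxAlgebra

variable {K : Type} [Field K] {N : ℕ}

lemma aux_span_mono_iff (A : Set (Mon N)) (p : MvPolynomial (Fin N) K) :
    p ∈ Submodule.span K (mono K '' A) ↔ ∀ v ∈ p.support, v ∈ A := by
  classical
  constructor
  · intro hp
    induction hp using Submodule.span_induction with
    | mem x hx =>
      obtain ⟨u, hu, rfl⟩ := hx
      intro v hv
      rw [mono, MvPolynomial.support_monomial] at hv
      simp only [if_neg (one_ne_zero : (1 : K) ≠ 0)] at hv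
      rwa [Finset.mem_singleton.mp hv]
    | zero => simp
    | add x y _ _ hx hy =>
      intro v hv
      rcases Finset.mem_union.mp (Finsupp.support_add hv) with h | h
      · exact hx v h
      · exact hy v h
    | smul c x _ hx =>
      intro v hv
      exact hx v (Finsupp.support_smul hv)
  · intro h
    rw [← MvPolynomial.support_sum_monomial_coeff p]
    apply Submodule.sum_mem
    intro v hv
    have heq : (MvPolynomial.monomial v) (MvPolynomial.coeff v p)
        = (MvPolynomial.coeff v p) • mono K v := by
      rw [mono, MvPolynomial.smul_monomial, smul_eq_mul, mul_one]
    rw [heq]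
    exact Submodule.smul_mem _ _ (Submodule.subset_span ⟨v, h v hv, rfl⟩)

variable {J : Set (Mon N)} {I : Ideal (MvPolynomial (Fin N) K)}

lemma aux_eq_zero (hI : MemMf K J I) {p : MvPolynomial (Fin N) K}
    (hpI : p ∈ I) (hsupp : ∀ v ∈ p.support, v ∉ J) : p = 0 := by
  classical
  set s : Finset {u : Mon N // u ∉ J} :=
    p.support.attach.image (fun x => (⟨x.1, hsupp x.1 x.2⟩ : {u : Mon N // u ∉ J})) with hs
  set g : {u : Mon N // u ∉ J} → K := fun u => MvPolynomial.coeff u.1 p with hg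
  have hinj : ∀ x ∈ p.support.attach, ∀ y ∈ p.support.attach,
      (⟨x.1, hsupp x.1 x.2⟩ : {u : Mon N // u ∉ J}) = ⟨y.1, hsupp y.1 y.2⟩ → x = y := by
    intro x _ y _ hxy
    exact Subtype.ext (congrArg (Subtype.val : {u : Mon N // u ∉ J} → Mon N) hxy)
  have key : ∑ i ∈ s, g i • (Ideal.Quotient.mk I (mono K i.1)) = 0 := by
    rw [hs, Finset.sum_image hinj]
    have : ∑ x ∈ p.support.attach, g ⟨x.1, hsupp x.1 x.2⟩ • Ideal.Quotient.mk I (mono K x.1)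
        = ∑ v ∈ p.support, MvPolynomial.coeff v p • Ideal.Quotient.mk I (mono K v) := by
      rw [← Finset.sum_attach p.support
        (fun v => MvPolynomial.coeff v p • Ideal.Quotient.mk I (mono K v))]
    rw [this]
    simp only [← Ideal.Quotient.mkₐ_eq_mk K I]
    simp only [← map_smul (Ideal.Quotient.mkₐ K I)]
    rw [← map_sum (Ideal.Quotient.mkₐ K I)
      (fun v => MvPolynomial.coeff v p • mono K v) p.support]
    · rw [show ∑ v ∈ p.support, MvPolynomial.coeff v p • mono K v = p from ?_]
      · rw [Ideal.Quotient.mkₐ_eq_mk, Ideal.Quotient.eq_zero_iff_mem]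
        exact hpI
      · conv_rhs => rw [← MvPolynomial.support_sum_monomial_coeff p]
        apply Finset.sum_congr rfl
        intro v _
        rw [mono, MvPolynomial.smul_monomial, smul_eq_mul, mul_one]
  have hz := linearIndependent_iff'.mp hI.2.1 s g key
  ext v
  rw [MvPolynomial.coeff_zero]
  by_cases hv : v ∈ p.support
  · exact hz ⟨v, hsupp v hv⟩ (Finset.mem_image.mpr ⟨⟨v, hv⟩, Finset.mem_attach _ _, rfl⟩)
  · exact MvPolynomial.notMem_support_iff.mp hv

lemma aux_decomp (hI : MemMf K J I) (p : MvPolynomial (Fin N) K) :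
    ∃ r : MvPolynomial (Fin N) K, (∀ v ∈ r.support, v ∉ J) ∧ p - r ∈ I := by
  have h1 : Ideal.Quotient.mk I p ∈ Submodule.span K
      (Set.range fun u : {u : Mon N // u ∉ J} => Ideal.Quotient.mk I (mono K u.1)) :=
    hI.2.2 trivial
  have hrange : (Set.range fun u : {u : Mon N // u ∉ J} => Ideal.Quotient.mk I (mono K u.1))
      = ⇑(Ideal.Quotient.mkₐ K I).toLinearMap '' (mono K '' {u : Mon N | u ∉ J}) := by
    ext y
    constructor
    · rintro ⟨u, rfl⟩
      exact ⟨mono K u.1, ⟨u.1, u.2, rfl⟩, by simp [Ideal.Quotient.mkₐ_eq_mk]⟩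
    · rintro ⟨q, ⟨u, hu, rfl⟩, rfl⟩
      exact ⟨⟨u, hu⟩, by simp [Ideal.Quotient.mkₐ_eq_mk]⟩
  rw [hrange, Submodule.span_image] at h1
  obtain ⟨r, hr, hrp⟩ := Submodule.mem_map.mp h1
  refine ⟨r, (aux_span_mono_iff {u : Mon N | u ∉ J} r).mp hr, ?_⟩
  have : Ideal.Quotient.mk I (p - r) = 0 := by
    rw [map_sub]
    have : Ideal.Quotient.mk I r = Ideal.Quotient.mk I p := by
      rw [← Ideal.Quotient.mkₐ_eq_mk K I]
      exact hrp
    rw [this, sub_self]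
  exact Ideal.Quotient.eq_zero_iff_mem.mp this

lemma aux_hc_self {p : MvPolynomial (Fin N) K} {t : ℕ} (hp : p.IsHomogeneous t) :
    MvPolynomial.homogeneousComponent t p = p := by
  ext v
  rw [MvPolynomial.coeff_homogeneousComponent]
  split_ifs with h
  · rfl
  · exact (hp.coeff_eq_zero h).symm

lemma aux_hc_ne {p : MvPolynomial (Fin N) K} {t s : ℕ} (hp : p.IsHomogeneous t)
    (hst : s ≠ t) : MvPolynomial.homogeneousComponent s p = 0 := by
  ext v
  rw [MvPolynomial.coeff_homogeneousComponent]
  split_ifs with h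
  · rw [MvPolynomial.coeff_zero]
    exact hp.coeff_eq_zero (by rw [h]; exact hst)
  · rw [MvPolynomial.coeff_zero]

lemma aux_supp_deg {p : MvPolynomial (Fin N) K} {t : ℕ} (hp : p.IsHomogeneous t)
    {v : Mon N} (hv : v ∈ p.support) : mdeg v = t := by
  rw [mdeg_degree]
  by_contra hc
  exact MvPolynomial.mem_support_iff.mp hv (hp.coeff_eq_zero hc)

lemma aux_decomp_homog (hI : MemMf K J I) {p : MvPolynomial (Fin N) K} {t : ℕ}
    (hp : p.IsHomogeneous t) :
    ∃ r : MvPolynomial (Fin N) K, (∀ v ∈ r.support, v ∉ J) ∧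
      r.IsHomogeneous t ∧ p - r ∈ I := by
  obtain ⟨r, hsupp, hpr⟩ := aux_decomp hI p
  refine ⟨MvPolynomial.homogeneousComponent t r, ?_, ?_, ?_⟩
  · intro v hv
    apply hsupp v
    rw [MvPolynomial.mem_support_iff] at hv ⊢
    rw [MvPolynomial.coeff_homogeneousComponent] at hv
    intro hc
    apply hv
    rw [hc]
    simp
  · exact MvPolynomial.homogeneousComponent_isHomogeneous t r
  · have : MvPolynomial.homogeneousComponent t (p - r)
        = p - MvPolynomial.homogeneousComponent t r := by
      rw [map_sub, aux_hc_self hp]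
    rw [← this]
    exact hI.1 _ hpr t
end AuxAlgebra
section AuxKey

variable {K : Type} [Field K] {n : ℕ} {J : Set (Mon (n + 1))}
  {I : Ideal (MvPolynomial (Fin (n + 1)) K)}

/-- The key lemma: if `u + e₀ ∈ J → u ∈ J` in degree `s`, then `x₀` is a
nonzerodivisor modulo `I` in degree `s`. -/
lemma aux_key (hI : MemMf K J I) {s : ℕ}
    (hHJ : ∀ u : Mon (n + 1), mdeg u = s → u + Finsupp.single 0 1 ∈ J → u ∈ J)
    {p : MvPolynomial (Fin (n + 1)) K} (hp : p.IsHomogeneous s)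
    (hx : MvPolynomial.X 0 * p ∈ I) : p ∈ I := by
  classical
  obtain ⟨r, hsupp, hrhom, hpr⟩ := aux_decomp_homog hI hp
  have hxr : MvPolynomial.X 0 * r ∈ I := by
    have he : MvPolynomial.X 0 * r
        = MvPolynomial.X 0 * p - MvPolynomial.X 0 * (p - r) := by ring
    rw [he]
    exact Ideal.sub_mem _ hx (Ideal.mul_mem_left _ _ hpr)
  have hz : MvPolynomial.X 0 * r = 0 := by
    apply aux_eq_zero hI hxr
    intro v hv hvJ
    have hsub := MvPolynomial.support_mul (MvPolynomial.X 0) r hv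
    rw [MvPolynomial.support_X, Finset.mem_add] at hsub
    obtain ⟨a, ha, b, hb, hab⟩ := hsub
    rw [Finset.mem_singleton] at ha
    subst ha
    have hbJ : b + Finsupp.single 0 1 ∈ J := by
      rw [add_comm b (Finsupp.single 0 1), hab]; exact hvJ
    exact hsupp b hb (hHJ b (aux_supp_deg hrhom hb) hbJ)
  have hr0 : r = 0 := by
    rcases mul_eq_zero.mp hz with h | h
    · exact absurd h (MvPolynomial.X_ne_zero 0)
    · exact h
  rwa [hr0, sub_zero] at hpr

lemma aux_descend (hI : MemMf K J I) {m : ℕ}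
    (hHJ : ∀ u : Mon (n + 1), m ≤ mdeg u → u + Finsupp.single 0 1 ∈ J → u ∈ J)
    (k : ℕ) :
    ∀ (t : ℕ) (p : MvPolynomial (Fin (n + 1)) K), p.IsHomogeneous t → m ≤ t →
      MvPolynomial.X 0 ^ k * p ∈ I → p ∈ I := by
  induction k with
  | zero => intro t p _ _ h; simpa using h
  | succ k ih =>
    intro t p hp hm h
    have h1 : MvPolynomial.X 0 ^ k * (MvPolynomial.X 0 * p) ∈ I := by
      rw [← mul_assoc, ← pow_succ]; exact h
    have h2 : (MvPolynomial.X 0 * p).IsHomogeneous (1 + t) :=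
      (MvPolynomial.isHomogeneous_X K 0).mul hp
    have h3 := ih (1 + t) (MvPolynomial.X 0 * p) h2 (by omega) h1
    refine aux_key hI (fun u hu => hHJ u (by omega)) hp h3

lemma aux_X_pow_homog (k : ℕ) :
    (MvPolynomial.X (0 : Fin (n + 1)) ^ k : MvPolynomial (Fin (n + 1)) K).IsHomogeneous k := by
  rw [MvPolynomial.X_pow_eq_monomial]
  exact MvPolynomial.isHomogeneous_monomial _ (by rw [← mdeg_degree, mdeg_single])

lemma aux_hc_mul_pow (k d : ℕ) (p : MvPolynomial (Fin (n + 1)) K) :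
    MvPolynomial.homogeneousComponent (d + k) (MvPolynomial.X 0 ^ k * p)
      = MvPolynomial.X 0 ^ k * MvPolynomial.homogeneousComponent d p := by
  conv_lhs => rw [← MvPolynomial.sum_homogeneousComponent p]
  rw [Finset.mul_sum, map_sum]
  have hterm : ∀ i : ℕ,
      MvPolynomial.homogeneousComponent (d + k)
        (MvPolynomial.X 0 ^ k * MvPolynomial.homogeneousComponent i p)
      = if i = d then MvPolynomial.X 0 ^ k * MvPolynomial.homogeneousComponent d p else 0 := by
    intro i
    have hh : (MvPolynomial.X 0 ^ k * MvPolynomial.homogeneousComponent i p).IsHomogeneous (k + i) :=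
      (aux_X_pow_homog k).mul (MvPolynomial.homogeneousComponent_isHomogeneous i p)
    split_ifs with hid
    · subst hid
      exact aux_hc_self (by rwa [add_comm k i] at hh)
    · exact aux_hc_ne hh (by omega)
  rw [Finset.sum_congr rfl (fun i _ => hterm i)]
  rw [Finset.sum_ite_eq' (Finset.range (p.totalDegree + 1)) d
    (fun _ => MvPolynomial.X 0 ^ k * MvPolynomial.homogeneousComponent d p)]
  split_ifs with hd
  · rfl
  · rw [Finset.mem_range, not_lt] at hd
    rw [MvPolynomial.homogeneousComponent_eq_zero d p (by omega), mul_zero]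

end AuxKey

section AuxSat

variable {K : Type} [Field K] {N : ℕ} {I : Ideal (MvPolynomial (Fin N) K)}

lemma aux_mem_sat_iff {p : MvPolynomial (Fin N) K} :
    p ∈ satIdeal K I ↔ ∃ k : ℕ, p ∈ Submodule.colon I ((irrel K N ^ k : Ideal (MvPolynomial (Fin N) K)) : Set (MvPolynomial (Fin N) K)) := by
  have hmono : Monotone (fun k : ℕ => Submodule.colon I ((irrel K N ^ k : Ideal (MvPolynomial (Fin N) K)) : Set (MvPolynomial (Fin N) K))) := by
    intro a b hab
    exact Submodule.colon_mono le_rfl (SetLike.coe_subset_coe.mpr (Ideal.pow_le_pow_right hab))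
  exact Submodule.mem_iSup_of_directed _ hmono.directed_le

lemma aux_I_le_sat : I ≤ satIdeal K I := by
  intro p hp
  refine aux_mem_sat_iff.mpr ⟨0, Submodule.mem_colon.mpr fun z _ => ?_⟩
  rw [smul_eq_mul]
  exact Ideal.mul_mem_right z I hp

lemma aux_X0_mem_irrel {n : ℕ} : MvPolynomial.X (0 : Fin (n + 1)) ∈ irrel K (n + 1) :=
  Ideal.subset_span ⟨0, rfl⟩

lemma aux_sat_easy {n : ℕ} {I : Ideal (MvPolynomial (Fin (n + 1)) K)}
    {p : MvPolynomial (Fin (n + 1)) K} (hp : p ∈ satIdeal K I) :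
    ∃ k : ℕ, MvPolynomial.X 0 ^ k * p ∈ I := by
  obtain ⟨k, hk⟩ := aux_mem_sat_iff.mp hp
  refine ⟨k, ?_⟩
  have hx : MvPolynomial.X (0 : Fin (n + 1)) ^ k ∈ irrel K (n + 1) ^ k :=
    Ideal.pow_mem_pow aux_X0_mem_irrel k
  have := Submodule.mem_colon.mp hk _ hx
  rwa [smul_eq_mul, mul_comm] at this

lemma aux_irrel_pow_le (m : ℕ) :
    irrel K N ^ m ≤ Ideal.span ((mono K) '' {w : Mon N | mdeg w = m}) := by
  induction m with
  | zero =>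
    rw [pow_zero]
    have h1 : (1 : MvPolynomial (Fin N) K) ∈ Ideal.span ((mono K) '' {w : Mon N | mdeg w = 0}) := by
      apply Ideal.subset_span
      refine ⟨0, mdeg_zero, ?_⟩
      rw [mono, MvPolynomial.monomial_zero', MvPolynomial.C_1]
    rw [Ideal.one_eq_top, (Ideal.eq_top_iff_one _).mpr h1]
  | succ m ih =>
    rw [pow_succ]
    calc irrel K N ^ m * irrel K N
        ≤ Ideal.span ((mono K) '' {w : Mon N | mdeg w = m}) * Ideal.span (Set.range MvPolynomial.X) :=
          Ideal.mul_mono ih le_rfl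
      _ ≤ Ideal.span ((mono K) '' {w : Mon N | mdeg w = m + 1}) := by
          rw [Ideal.span_mul_span]
          apply Ideal.span_le.mpr
          intro z hz
          rw [Set.mem_mul] at hz
          obtain ⟨a, ⟨w, hw, rfl⟩, b, ⟨i, rfl⟩, hz⟩ := hz
          subst hz
          apply Ideal.subset_span
          rw [Set.mem_setOf_eq] at hw
          refine ⟨w + Finsupp.single i 1, by
            show mdeg _ = m + 1
            rw [mdeg_add, hw, mdeg_single], ?_⟩
          rw [mono, mono, MvPolynomial.X, MvPolynomial.monomial_mul, mul_one]

lemma aux_sat_hard {n : ℕ} {J : Set (Mon (n + 1))} {I : Ideal (MvPolynomial (Fin (n + 1)) K)}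
    (hI : MemMf K J I) {m : ℕ}
    (hHJ : ∀ u : Mon (n + 1), m ≤ mdeg u → u + Finsupp.single 0 1 ∈ J → u ∈ J)
    {p : MvPolynomial (Fin (n + 1)) K} (hp : ∃ k : ℕ, MvPolynomial.X 0 ^ k * p ∈ I) :
    p ∈ satIdeal K I := by
  obtain ⟨k, hk⟩ := hp
  rw [← MvPolynomial.sum_homogeneousComponent p]
  apply Ideal.sum_mem
  intro d _
  have hcomp : MvPolynomial.X 0 ^ k * MvPolynomial.homogeneousComponent d p ∈ I := by
    rw [← aux_hc_mul_pow]
    exact hI.1 _ hk (d + k)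
  refine aux_mem_sat_iff.mpr ⟨m, Submodule.mem_colon.mpr fun z hz => ?_⟩
  have hz' : z ∈ Ideal.span ((mono K) '' {w : Mon (n + 1) | mdeg w = m}) :=
    aux_irrel_pow_le m hz
  clear hz
  induction hz' using Submodule.span_induction with
  | mem x hx =>
    obtain ⟨w, hw, rfl⟩ := hx
    rw [smul_eq_mul, mul_comm]
    have h1 : MvPolynomial.X 0 ^ k * (mono K w * MvPolynomial.homogeneousComponent d p) ∈ I := by
      rw [show MvPolynomial.X 0 ^ k * (mono K w * MvPolynomial.homogeneousComponent d p)
          = mono K w * (MvPolynomial.X 0 ^ k * MvPolynomial.homogeneousComponent d p) by ring]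
      exact Ideal.mul_mem_left _ _ hcomp
    have h2 : (mono K w * MvPolynomial.homogeneousComponent d p).IsHomogeneous (m + d) := by
      refine MvPolynomial.IsHomogeneous.mul ?_ (MvPolynomial.homogeneousComponent_isHomogeneous d p)
      exact MvPolynomial.isHomogeneous_monomial _ (by rw [← mdeg_degree, hw])
    exact aux_descend hI hHJ k (m + d) _ h2 (by omega) h1
  | zero => simp
  | add x y _ _ hx hy =>
    rw [smul_add]
    exact Ideal.add_mem _ hx hy
  | smul c x _ hx =>
    rw [smul_comm]
    exact Submodule.smul_mem _ _ hx

end AuxSat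
/-- for `I ∈ Mf(J)` with `J` strongly stable: `x_0` is a nonzero
divisor on `S/I^sat`, `sat I ≤ sat J`, if `J` is saturated then so is `I`,
and `(I : x_0^∞) = I^sat`. -/
theorem markedFamily_satiety {n : ℕ} (K : Type) [Field K]
    (J : Set (Mon (n + 1))) (I : Ideal (MvPolynomial (Fin (n + 1)) K))
    (hss : StronglyStable J) (hI : MemMf K J I) :
    (∀ p : MvPolynomial (Fin (n + 1)) K,
        MvPolynomial.X 0 * p ∈ satIdeal K I → p ∈ satIdeal K I) ∧
    satiety K I ≤ msatiety J ∧
    (J = msat J → I = satIdeal K I) ∧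
    (∀ p : MvPolynomial (Fin (n + 1)) K,
        (∃ k : ℕ, MvPolynomial.X 0 ^ k * p ∈ I) ↔ p ∈ satIdeal K I) := by
  classical
  obtain ⟨m0, hm0⟩ := aux_D (N := n + 1) (J := J) hss.1
  have hne : {m : ℕ | ∀ u : Mon (n + 1), m ≤ mdeg u → (u ∈ J ↔ u ∈ msat J)}.Nonempty :=
    ⟨m0, hm0⟩
  have hmsat : ∀ u : Mon (n + 1), msatiety J ≤ mdeg u → (u ∈ J ↔ u ∈ msat J) :=
    Nat.sInf_mem hne
  have hHJ : ∀ u : Mon (n + 1), msatiety J ≤ mdeg u →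
      u + Finsupp.single 0 1 ∈ J → u ∈ J :=
    aux_HJ hss (fun u hu hmem => (hmsat u hu).mpr hmem)
  have claim4 : ∀ p : MvPolynomial (Fin (n + 1)) K,
      (∃ k : ℕ, MvPolynomial.X 0 ^ k * p ∈ I) ↔ p ∈ satIdeal K I :=
    fun p => ⟨fun h => aux_sat_hard hI hHJ h, fun h => aux_sat_easy h⟩
  refine ⟨?_, ?_, ?_, claim4⟩
  · -- x₀ is a nonzerodivisor modulo I^sat
    intro p hp
    obtain ⟨k, hk⟩ := (claim4 _).mpr hp
    refine (claim4 p).mp ⟨k + 1, ?_⟩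
    rw [pow_succ, mul_assoc]
    exact hk
  · -- satiety I ≤ msatiety J
    apply Nat.sInf_le
    intro t ht p hp
    constructor
    · exact fun h => aux_I_le_sat h
    · intro h
      obtain ⟨k, hk⟩ := aux_sat_easy h
      exact aux_descend hI hHJ k t p hp ht hk
  · -- if J is saturated then I is saturated
    intro hJs
    apply le_antisymm aux_I_le_sat
    intro p hp
    obtain ⟨k, hk⟩ := aux_sat_easy hp
    have hHJ0 : ∀ u : Mon (n + 1), 0 ≤ mdeg u → u + Finsupp.single 0 1 ∈ J → u ∈ J :=
      aux_HJ hss (fun u _ hmem => by rw [hJs]; exact hmem)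
    rw [← MvPolynomial.sum_homogeneousComponent p]
    apply Ideal.sum_mem
    intro d _
    have hcomp : MvPolynomial.X 0 ^ k * MvPolynomial.homogeneousComponent d p ∈ I := by
      rw [← aux_hc_mul_pow]
      exact hI.1 _ hk (d + k)
    exact aux_descend hI hHJ0 k d _
      (MvPolynomial.homogeneousComponent_isHomogeneous d p) (Nat.zero_le d) hcomp

end Paper
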